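/- Let V be a Hausdorff topological vector space over ℝ and K a strict closed convex cone in V (i.e., K is a closed convex cone with K ∩ (−K) = {0}), with associated partial order x ≤ y iff y − x ∈ K. Then any nonempty subset S of V which is directed with respect to ≤ and is contained in a compact subset of V has a least upper bound with respect to ≤ in V. -/

import Mathlib

/-- Let `V` be a Hausdorff topological real vector space and `K` a strict
closed convex cone in `V`, with associated partial order `x ≤ y ↔ y - x ∈ K`.  Any nonempty
subset `S` of `V` which is directed with respect to `≤` and contained in a compact subset of
`V` has a least upper bound with respect to `≤`. -/
theorem exists_lub_of_directed_of_compact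
    {V : Type*} [AddCommGroup V] [Module ℝ V] [TopologicalSpace V]
    [IsTopologicalAddGroup V] [ContinuousSMul ℝ V] [T2Space V]
    (K : Set V)
    (hK0 : (0 : V) ∈ K)
    (hKadd : ∀ x ∈ K, ∀ y ∈ K, x + y ∈ K)
    (hKsmul : ∀ c : ℝ, 0 ≤ c → ∀ x ∈ K, c • x ∈ K)
    (hKclosed : IsClosed K)
    (hKstrict : K ∩ (-K) = {0})
    (S : Set V) (hSne : S.Nonempty)
    (hdir : ∀ x ∈ S, ∀ y ∈ S, ∃ z ∈ S, z - x ∈ K ∧ z - y ∈ K)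
    (hcpt : ∃ C : Set V, IsCompact C ∧ S ⊆ C) :
    ∃ b : V, (∀ x ∈ S, b - x ∈ K) ∧ ∀ b' : V, (∀ x ∈ S, b' - x ∈ K) → b' - b ∈ K := by
  obtain ⟨C, hC, hSC⟩ := hcpt
  -- the closed sets T x = closure {z ∈ S : z - x ∈ K}, indexed by x : S
  set T : S → Set V := fun x => closure {z | z ∈ S ∧ z - (x : V) ∈ K} with hT
  -- {z | z - x ∈ K} is closed
  have hclosed_above : ∀ x : V, IsClosed {z : V | z - x ∈ K} :=
    fun x => hKclosed.preimage (continuous_id.sub continuous_const)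
  have hTsub : ∀ x : S, T x ⊆ {z : V | z - (x : V) ∈ K} := fun x =>
    closure_minimal (fun z hz => hz.2) (hclosed_above x)
  -- finite intersection property
  have hfip : ∀ u : Finset S, ∃ z ∈ S, ∀ x ∈ u, z - (x : V) ∈ K := by
    intro u
    classical
    induction u using Finset.induction_on with
    | empty => exact ⟨hSne.choose, hSne.choose_spec, by simp⟩
    | @insert a s' ha ih =>
      obtain ⟨z, hzS, hz⟩ := ih
      obtain ⟨w, hwS, hwa, hwz⟩ := hdir a.1 a.2 z hzS
      refine ⟨w, hwS, ?_⟩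
      intro x hxu
      rcases Finset.mem_insert.1 hxu with h | h
      · exact h ▸ hwa
      · have := hKadd _ hwz _ (hz x h)
        simpa [sub_add_sub_cancel] using this
  have hne : (C ∩ ⋂ x : S, T x).Nonempty := by
    refine hC.inter_iInter_nonempty T (fun x => isClosed_closure) ?_
    intro u
    obtain ⟨z, hzS, hz⟩ := hfip u
    refine ⟨z, hSC hzS, ?_⟩
    simp only [Set.mem_iInter]
    intro x hxu
    exact subset_closure ⟨hzS, hz x hxu⟩
  obtain ⟨b, hbC, hbT⟩ := hne
  simp only [Set.mem_iInter] at hbT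
  refine ⟨b, fun x hx => hTsub ⟨x, hx⟩ (hbT ⟨x, hx⟩), ?_⟩
  intro b' hb'
  -- b ∈ closure S ⊆ {z | b' - z ∈ K}
  obtain ⟨x0, hx0⟩ := hSne
  have hbS : b ∈ closure S :=
    closure_mono (fun z hz => hz.1) (hbT ⟨x0, hx0⟩)
  have : closure S ⊆ {z : V | b' - z ∈ K} := by
    refine closure_minimal hb' (hKclosed.preimage ?_)
    exact continuous_const.sub continuous_id
  exact this hbS
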